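/- Let n, p ∈ ℕ and m = p + n, let X ⊆ ℝⁿ, D ⊆ ℝᵖ, B : ℝⁿ → ℝ, f : ℝⁿ × ℝᵖ → ℝⁿ, let S be a symmetric m × m real matrix, and define the supply rate q(x, d) = v(x, d)ᵀ S v(x, d) where v(x, d) = (d; x) is the concatenated vector. Suppose the function g(x, d) = B(f(x, d)) − B(x) is Lipschitz on X × D with constant L ≥ 0 (product metric), and there are finitely many samples (x^z, d^z) ∈ X × D, z = 1, …, N, such that every point of X × D lies within distance θ ≥ 0 of some sample, and at every sample both B(f(x^z, d^z)) − B(x^z) − q(x^z, d^z) ≤ η and q(x^z, d^z) ≤ β hold. Then for every (x, d) ∈ X × D, B(f(x, d)) − B(x) ≤ η + β + L·θ. -/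

import Mathlib

/-- **Data-driven extension of the scenario decrease estimate.**
With supply rate `q(x,d) = v(x,d)ᵀ S v(x,d)`, `v(x,d) = (d; x)`, if
`g(x,d) = B(f(x,d)) - B(x)` is Lipschitz on `X ×ˢ D` with constant `L`, the
finitely many samples `θ`-cover `X ×ˢ D`, and at every sample both
`B(f(x^z,d^z)) - B(x^z) - q(x^z,d^z) ≤ η` and `q(x^z,d^z) ≤ β` hold, then
`B(f(x,d)) - B(x) ≤ η + β + L * θ` on all of `X ×ˢ D`. -/
theorem scenario_decrease_extension (n p : ℕ)
    (X : Set (Fin n → ℝ)) (D : Set (Fin p → ℝ))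
    (B : (Fin n → ℝ) → ℝ)
    (f : (Fin n → ℝ) × (Fin p → ℝ) → Fin n → ℝ)
    (S : Matrix (Fin (p + n)) (Fin (p + n)) ℝ) (hS : S.IsSymm)
    (L θ η β : ℝ) (hL : 0 ≤ L) (hθ : 0 ≤ θ)
    (hLip : ∀ q ∈ X ×ˢ D, ∀ r ∈ X ×ˢ D,
      |(B (f q) - B q.1) - (B (f r) - B r.1)| ≤ L * dist q r)
    (N : ℕ) (samp : Fin N → (Fin n → ℝ) × (Fin p → ℝ))
    (hmem : ∀ z, samp z ∈ X ×ˢ D)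
    (hcover : ∀ q ∈ X ×ˢ D, ∃ z, dist q (samp z) ≤ θ)
    (hdis : ∀ z, B (f (samp z)) - B (samp z).1 -
      dotProduct (Fin.append (samp z).2 (samp z).1)
        (S.mulVec (Fin.append (samp z).2 (samp z).1)) ≤ η)
    (hsup : ∀ z, dotProduct (Fin.append (samp z).2 (samp z).1)
        (S.mulVec (Fin.append (samp z).2 (samp z).1)) ≤ β) :
    ∀ q ∈ X ×ˢ D, B (f q) - B q.1 ≤ η + β + L * θ := by
  intro q hq
  obtain ⟨z, hz⟩ := hcover q hq
  have h1 := hLip q hq (samp z) (hmem z)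
  have h2 := hdis z
  have h3 := hsup z
  have h4 : L * dist q (samp z) ≤ L * θ := mul_le_mul_of_nonneg_left hz hL
  have := abs_le.mp h1
  linarith [this.2]
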